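/- Let q be a prime power, r ≥ 1 an integer, and n, k, d positive integers with (r+1) dividing n and r dividing k. Suppose there exists a real number x with 0 < x ≤ 1 such that q^(k−n) · x^(−d) · (1 + x·(q−1))^n · (1 + (q−1) · ((1−x)/(1 + x·(q−1)))^(r+1))^(n/(r+1)) < 1. Then there exists a code C ⊆ F_q^n with exactly q^k codewords such that any two distinct codewords are at Hamming distance at least d and C is r-locally recoverable. -/

import Mathlib

open Finset

section helpers
set_option linter.unusedSectionVars false
variable {F : Type} [Field F] [Fintype F] [DecidableEq F]

lemma wt_cons {t : ℕ} (c : F) (u : Fin t → F) :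
    hammingNorm (Fin.cons c u : Fin (t+1) → F)
      = (if c = 0 then 0 else 1) + hammingNorm u := by
  simp only [hammingNorm, card_filter, Fin.sum_univ_succ, Fin.cons_zero, Fin.cons_succ]
  by_cases h : c = 0 <;> simp [h]

lemma sum_ite_zero_one (x : ℝ) :
    ∑ c : F, (if c = 0 then (1:ℝ) else x)
      = 1 + ((Fintype.card F : ℝ) - 1) * x := by
  have h2 : ∀ c : F, (if c = 0 then (1:ℝ) else x) = x + if c = 0 then 1 - x else 0 := by
    intro c; by_cases h : c = 0 <;> simp [h]
  simp only [h2]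
  rw [Finset.sum_add_distrib, Finset.sum_const, Finset.sum_ite_eq' univ (0:F)]
  simp [nsmul_eq_mul]
  ring

lemma sum_pow_wt (x : ℝ) (t : ℕ) :
    ∑ u : Fin t → F, x ^ hammingNorm u
      = (1 + ((Fintype.card F : ℝ) - 1) * x) ^ t := by
  induction t with
  | zero =>
    simp [hammingNorm]
  | succ t ih =>
    rw [← (Fin.consEquiv (fun _ : Fin (t+1) => F)).sum_comp
      (fun u => x ^ hammingNorm u)]
    rw [Fintype.sum_prod_type]
    have key : ∀ (c : F) (u : Fin t → F),
        x ^ hammingNorm ((Fin.consEquiv (fun _ : Fin (t+1) => F)) (c, u))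
          = (if c = 0 then 1 else x) * x ^ hammingNorm u := by
      intro c u
      have : (Fin.consEquiv (fun _ : Fin (t+1) => F)) (c, u) = Fin.cons c u := rfl
      rw [this, wt_cons, pow_add]
      by_cases h : c = 0 <;> simp [h]
    simp only [key]
    rw [← Finset.sum_mul_sum, ih, pow_succ, sum_ite_zero_one]
    ring

/-- weight enumerator of the single parity check code -/
lemma enum_zero (x : ℝ) (t : ℕ) :
    ∑ u : Fin t → F, (if (∑ j, u j) = 0 then x ^ hammingNorm u else 0)
      = ((1 + ((Fintype.card F : ℝ) - 1) * x) ^ t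
          + ((Fintype.card F : ℝ) - 1) * (1 - x) ^ t) / (Fintype.card F : ℝ) := by
  have hQ : (0:ℝ) < (Fintype.card F : ℝ) := by
    exact_mod_cast Fintype.card_pos
  induction t with
  | zero =>
    simp [hammingNorm]
  | succ t ih =>
    set g : F → ℝ := fun s => ∑ u : Fin t → F, if (∑ j, u j) = s then x ^ hammingNorm u else 0
      with hg
    have hgtot : ∑ c : F, g (-c) = (1 + ((Fintype.card F : ℝ) - 1) * x) ^ t := by
      rw [← sum_pow_wt x t]
      have hneg : ∑ c : F, g (-c) = ∑ s : F, g s :=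
        Fintype.sum_equiv (Equiv.neg F) _ _ (fun c => rfl)
      rw [hneg, hg]
      rw [Finset.sum_comm]
      congr 1
      funext u
      rw [Finset.sum_ite_eq univ (∑ j, u j)]
      simp
    have step : (∑ u : Fin (t+1) → F, if (∑ j, u j) = 0 then x ^ hammingNorm u else 0)
        = ∑ c : F, (if c = 0 then (1:ℝ) else x) * g (-c) := by
      rw [← (Fin.consEquiv (fun _ : Fin (t+1) => F)).sum_comp
        (fun u => if (∑ j, u j) = 0 then x ^ hammingNorm u else 0)]
      rw [Fintype.sum_prod_type]
      congr 1; funext c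
      rw [hg, Finset.mul_sum]
      congr 1; funext u
      have h1 : (Fin.consEquiv (fun _ : Fin (t+1) => F)) (c, u) = Fin.cons c u := rfl
      simp only [h1, Fin.sum_univ_succ, Fin.cons_zero, Fin.cons_succ, wt_cons]
      have hcond : (c + ∑ j, u j = 0) ↔ ((∑ j, u j) = -c) := by
        constructor <;> intro h <;> linear_combination h
      by_cases h : (∑ j, u j) = -c
      · rw [if_pos (hcond.mpr h), if_pos h, pow_add]
        by_cases hc : c = 0 <;> simp [hc]
      · rw [if_neg (fun hh => h (hcond.mp hh)), if_neg h, mul_zero]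
    have split : ∀ c : F, (if c = 0 then (1:ℝ) else x) * g (-c)
        = x * g (-c) + if c = 0 then (1 - x) * g 0 else 0 := by
      intro c; by_cases h : c = 0 <;> simp [h]; ring
    rw [step]
    simp only [split]
    rw [Finset.sum_add_distrib, ← Finset.mul_sum, hgtot, Finset.sum_ite_eq' univ (0:F)]
    simp only [mem_univ, if_true]
    have ih' : g 0 = ((1 + ((Fintype.card F : ℝ) - 1) * x) ^ t
          + ((Fintype.card F : ℝ) - 1) * (1 - x) ^ t) / (Fintype.card F : ℝ) := ih
    rw [ih']
    field_simp
    ring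

lemma wt_prod (m t : ℕ) (v : Fin m × Fin t → F) :
    hammingNorm v = ∑ b : Fin m, hammingNorm (fun j => v (b, j)) := by
  simp only [hammingNorm, card_filter, Fintype.sum_prod_type]

lemma prod_blocks (m t : ℕ) (g : (Fin t → F) → ℝ) :
    ∑ v : Fin m × Fin t → F, ∏ b : Fin m, g (fun j => v (b, j))
      = (∑ u : Fin t → F, g u) ^ m := by
  rw [← Equiv.sum_comp (Equiv.curry (Fin m) (Fin t) F).symm
      (fun v : Fin m × Fin t → F => ∏ b, g (fun j => v (b, j)))]
  have h1 : ∀ p : Fin m → Fin t → F,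
      (∏ b, g (fun j => ((Equiv.curry (Fin m) (Fin t) F).symm p) (b, j))) = ∏ b, g (p b) :=
    fun p => rfl
  simp only [h1]
  rw [← Fintype.piFinset_univ, ← Finset.prod_univ_sum]
  simp [Finset.prod_const]

/-- greedy choice of a code with given minimum distance inside `P`. -/
lemma greedy {ι G : Type} [Fintype ι] [DecidableEq G] (P : Finset (ι → G)) (d : ℕ)
    (hd : 0 < d) (B : ℝ) (hB : 0 ≤ B)
    (hball : ∀ c ∈ P, ((P.filter fun v => hammingDist v c < d).card : ℝ) ≤ B) :
    ∀ N : ℕ, (N : ℝ) * B < (P.card : ℝ) →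
      ∃ C : Finset (ι → G), C ⊆ P ∧ C.card = N ∧
        ∀ X ∈ C, ∀ Y ∈ C, X ≠ Y → d ≤ hammingDist X Y := by
  intro N
  induction N with
  | zero => intro _; exact ⟨∅, by simp, by simp, by simp⟩
  | succ N ih =>
    intro hN
    have hcast : ((N + 1 : ℕ) : ℝ) = (N : ℝ) + 1 := by push_cast; ring
    have hNB : (N:ℝ) * B < P.card := by
      refine lt_of_le_of_lt ?_ hN
      rw [hcast]
      nlinarith
    obtain ⟨C, hCP, hCcard, hCdist⟩ := ih hNB
    classical
    set U := C.biUnion (fun c => P.filter fun v => hammingDist v c < d) with hU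
    have hUP : U ⊆ P := Finset.biUnion_subset.mpr fun c _ => Finset.filter_subset _ _
    have hUcard : (U.card : ℝ) ≤ (N:ℝ) * B := by
      calc (U.card : ℝ) ≤ ((∑ c ∈ C, (P.filter fun v => hammingDist v c < d).card : ℕ) : ℝ) := by
            exact_mod_cast Finset.card_biUnion_le
        _ = ∑ c ∈ C, ((P.filter fun v => hammingDist v c < d).card : ℝ) := by push_cast; rfl
        _ ≤ ∑ _c ∈ C, B := Finset.sum_le_sum fun c hc => hball c (hCP hc)
        _ = N * B := by rw [Finset.sum_const, hCcard, nsmul_eq_mul]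
    have hUlt : U.card < P.card := by
      have : (U.card : ℝ) < (P.card : ℝ) := lt_of_le_of_lt hUcard hNB
      exact_mod_cast this
    have hne : (P \ U).Nonempty := by
      rw [← Finset.card_pos, Finset.card_sdiff_of_subset hUP]
      omega
    obtain ⟨p, hp⟩ := hne
    rw [Finset.mem_sdiff] at hp
    obtain ⟨hpP, hpU⟩ := hp
    have hfar : ∀ c ∈ C, d ≤ hammingDist p c := by
      intro c hc
      by_contra h
      push_neg at h
      exact hpU (Finset.mem_biUnion.mpr ⟨c, hc, Finset.mem_filter.mpr ⟨hpP, h⟩⟩)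
    have hpC : p ∉ C := by
      intro hc
      have := hfar p hc
      simp [hammingDist_self] at this
      omega
    refine ⟨insert p C, Finset.insert_subset hpP hCP, ?_, ?_⟩
    · rw [Finset.card_insert_of_notMem hpC, hCcard]
    · intro X hX Y hY hXY
      rcases Finset.mem_insert.mp hX with rfl | hX'
      · rcases Finset.mem_insert.mp hY with rfl | hY'
        · exact absurd rfl hXY
        · exact hfar Y hY'
      · rcases Finset.mem_insert.mp hY with rfl | hY'
        · rw [hammingDist_comm]; exact hfar X hX'
        · exact hCdist X hX' Y hY' hXY

end helpers

/-- (Theorem on concatenated codes with random linear outer code.)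
If for some `0 < x ≤ 1` the quantity
`q^{k-n} x^{-d} (1 + x(q-1))^n (1 + (q-1)((1-x)/(1+x(q-1)))^{r+1})^{n/(r+1)}`
is less than 1, then there exists a `q`-ary code of length `n` with exactly `q^k`
codewords, minimum distance at least `d`, and locality `r`. -/
theorem stmt_11 (q r n k d : ℕ) (hr : 1 ≤ r) (hn : 1 ≤ n) (hk : 1 ≤ k) (hd : 1 ≤ d)
    (hrn : (r + 1) ∣ n) (hrk : r ∣ k)
    (F : Type) [Field F] [Fintype F] [DecidableEq F] (hq : Fintype.card F = q)
    (x : ℝ) (hx0 : 0 < x) (hx1 : x ≤ 1)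
    (hlt : (q : ℝ) ^ ((k : ℤ) - (n : ℤ)) * x ^ (-(d : ℤ)) *
        (1 + x * ((q : ℝ) - 1)) ^ n *
        (1 + ((q : ℝ) - 1) * ((1 - x) / (1 + x * ((q : ℝ) - 1))) ^ (r + 1)) ^ (n / (r + 1))
      < 1) :
    ∃ C : Finset (Fin n → F), C.card = q ^ k ∧
      (∀ X ∈ C, ∀ Y ∈ C, X ≠ Y → d ≤ hammingDist X Y) ∧
      (∀ i : Fin n, ∃ R : Finset (Fin n), i ∉ R ∧ R.card = r ∧
        ∀ X ∈ C, ∀ Y ∈ C, X i ≠ Y i → ∃ l ∈ R, X l ≠ Y l) := by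
  classical
  obtain ⟨m, hm⟩ := hrn
  have hq1 : 1 < q := hq ▸ Fintype.one_lt_card
  set Q : ℝ := (q : ℝ) with hQdef
  have hQ1 : (1:ℝ) < Q := by rw [hQdef]; exact_mod_cast hq1
  have hQ0 : (0:ℝ) < Q := by linarith
  have hm1 : 1 ≤ m := by
    rcases Nat.eq_zero_or_pos m with h | h
    · subst h; simp at hm; omega
    · exact h
  have hndiv : n / (r + 1) = m := by rw [hm]; exact Nat.mul_div_cancel_left m (Nat.succ_pos r)
  have hu : (0:ℝ) < 1 + x * (Q - 1) := by nlinarith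
  -- the ambient product parity check code
  set P : Finset (Fin m × Fin (r+1) → F) :=
    univ.filter (fun v => ∀ b, ∑ j, v (b, j) = 0) with hPdef
  set a : ℝ := ((1 + (Q - 1) * x) ^ (r+1) + (Q - 1) * (1 - x) ^ (r+1)) / Q with hadef
  have ha0 : 0 ≤ a := by
    have h1 : (0:ℝ) ≤ 1 + (Q-1) * x := by nlinarith
    have h2 : (0:ℝ) ≤ 1 - x := by linarith
    have := pow_nonneg h1 (r+1)
    have := pow_nonneg h2 (r+1)
    have : (0:ℝ) ≤ (1 + (Q - 1) * x) ^ (r+1) + (Q - 1) * (1 - x) ^ (r+1) := by nlinarith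
    positivity
  -- weight enumerator of P
  have hS : ∑ v ∈ P, x ^ hammingNorm v = a ^ m := by
    rw [hPdef, Finset.sum_filter]
    have hsplit : ∀ v : Fin m × Fin (r+1) → F,
        (if (∀ b, ∑ j, v (b,j) = 0) then x ^ hammingNorm v else 0)
          = ∏ b, (if ∑ j, v (b,j) = 0 then x ^ hammingNorm (fun j => v (b,j)) else 0) := by
      intro v
      by_cases h : ∀ b, ∑ j, v (b,j) = 0
      · rw [if_pos h, wt_prod, ← Finset.prod_pow_eq_pow_sum]
        exact Finset.prod_congr rfl (fun b _ => (if_pos (h b)).symm)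
      · push_neg at h
        obtain ⟨b, hb⟩ := h
        rw [if_neg (by push_neg; exact ⟨b, hb⟩)]
        have hz : (if ∑ j, v (b,j) = 0 then x ^ hammingNorm (fun j => v (b,j)) else (0:ℝ)) = 0 :=
          if_neg hb
        exact (Finset.prod_eq_zero (mem_univ b) hz).symm
    simp only [hsplit]
    rw [prod_blocks m (r+1) (fun u => if (∑ j, u j) = 0 then x ^ hammingNorm u else 0)]
    rw [enum_zero x (r+1), hq]
  -- lower bound on the size of P
  have hPcard : (q:ℝ)^(r*m) ≤ (P.card : ℝ) := by
    set ι : (Fin m → Fin r → F) → (Fin m × Fin (r+1) → F) :=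
      fun u p => Fin.lastCases (-(∑ i, u p.1 i)) (u p.1) p.2 with hι
    have hmaps : ∀ u ∈ (univ : Finset (Fin m → Fin r → F)), ι u ∈ P := by
      intro u _
      rw [hPdef, Finset.mem_filter]
      refine ⟨mem_univ _, fun b => ?_⟩
      rw [Fin.sum_univ_castSucc]
      simp [hι]
    have hinj : Set.InjOn ι (univ : Finset (Fin m → Fin r → F)) := by
      intro u _ u' _ h
      funext b i
      have := congrFun h (b, Fin.castSucc i)
      simpa [hι] using this
    have hle := Finset.card_le_card_of_injOn ι hmaps hinj
    rw [Finset.card_univ] at hle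
    have hcard : Fintype.card (Fin m → Fin r → F) = q^(r*m) := by
      simp [Fintype.card_fun, hq]
      rw [← pow_mul, mul_comm]
    rw [hcard] at hle
    exact_mod_cast hle
  -- ball volume bound
  have hball : ∀ c ∈ P, ((P.filter fun v => hammingDist v c < d).card : ℝ)
      ≤ (x^(d-1))⁻¹ * a^m := by
    intro c hc
    have hcP : ∀ bb, ∑ j, c (bb, j) = 0 := by
      rw [hPdef, Finset.mem_filter] at hc; exact hc.2
    set W := P.filter (fun w => hammingNorm w < d) with hW
    have hcardeq : (P.filter fun v => hammingDist v c < d).card = W.card := by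
      apply Finset.card_bij (fun v _ => v - c)
      · intro v hvmem
        rw [Finset.mem_filter] at hvmem
        obtain ⟨hv1, hv2⟩ := hvmem
        rw [hPdef, Finset.mem_filter] at hv1
        rw [hW, Finset.mem_filter]
        constructor
        · rw [hPdef, Finset.mem_filter]
          refine ⟨mem_univ _, fun bb => ?_⟩
          have hh : ∑ j, (v - c) (bb, j) = ∑ j, (v (bb,j) - c (bb,j)) := rfl
          rw [hh, Finset.sum_sub_distrib, hv1.2 bb, hcP bb, sub_self]
        · rw [← neg_add_eq_sub, ← hammingDist_eq_hammingNorm, hammingDist_comm]; exact hv2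
      · intro v1 h1 v2 h2 h
        simpa using congrArg (· + c) h
      · intro w hwmem
        rw [hW, Finset.mem_filter] at hwmem
        obtain ⟨hw1, hw2⟩ := hwmem
        refine ⟨w + c, ?_, by simp⟩
        rw [Finset.mem_filter]
        constructor
        · rw [hPdef, Finset.mem_filter] at hw1 ⊢
          refine ⟨mem_univ _, fun bb => ?_⟩
          have hh : ∑ j, (w + c) (bb, j) = ∑ j, (w (bb,j) + c (bb,j)) := rfl
          rw [hh, Finset.sum_add_distrib, hw1.2 bb, hcP bb, add_zero]
        · rw [hammingDist_comm, hammingDist_eq_hammingNorm, show -c + (w + c) = w by abel]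
          exact hw2
    have hsum : (W.card : ℝ) * x^(d-1) ≤ a^m := by
      rw [← hS]
      calc (W.card:ℝ) * x^(d-1) = ∑ _w ∈ W, x^(d-1) := by
            rw [Finset.sum_const, nsmul_eq_mul]
        _ ≤ ∑ w ∈ W, x ^ hammingNorm w := Finset.sum_le_sum (fun w hw => by
            rw [hW, Finset.mem_filter] at hw
            exact pow_le_pow_of_le_one hx0.le hx1 (by omega))
        _ ≤ ∑ v ∈ P, x ^ hammingNorm v := Finset.sum_le_sum_of_subset_of_nonneg
            (hW ▸ Finset.filter_subset _ _) (fun v _ _ => pow_nonneg hx0.le _)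
    rw [hcardeq, inv_mul_eq_div, le_div_iff₀ (pow_pos hx0 _)]
    exact hsum
  -- key numeric inequality
  have hkey : ((q^k : ℕ) : ℝ) * ((x^(d-1))⁻¹ * a^m) < (q:ℝ)^(r*m) := by
    have hQne : Q ≠ 0 := ne_of_gt hQ0
    have h0 : Q ^ ((k:ℤ) - (n:ℤ)) = Q^k / Q^n := by
      rw [zpow_sub₀ hQne, zpow_natCast, zpow_natCast]
    have h1 : x ^ (-(d:ℤ)) = (x^d)⁻¹ := by
      rw [zpow_neg, zpow_natCast]
    have hQa : Q * a = (1 + x*(Q-1))^(r+1) + (Q-1)*(1-x)^(r+1) := by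
      rw [hadef]; field_simp
    have hfac : (1 + x*(Q-1))^n * (1 + (Q-1)*((1-x)/(1+x*(Q-1)))^(r+1))^m = (Q*a)^m := by
      rw [hm, pow_mul, ← mul_pow]
      congr 1
      rw [div_pow, hQa]
      field_simp
    have key0 : Q^k / Q^n * (x^d)⁻¹ * ((Q*a)^m) < 1 := by
      calc Q^k / Q^n * (x^d)⁻¹ * ((Q*a)^m)
          = Q ^ ((k:ℤ) - (n:ℤ)) * x ^ (-(d:ℤ)) * ((1 + x*(Q-1))^n *
              (1 + (Q-1)*((1-x)/(1+x*(Q-1)))^(r+1))^(n/(r+1))) := by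
            rw [hndiv, h0, h1, hfac]
        _ < 1 := by rw [← mul_assoc]; exact hlt
    have hQn : (0:ℝ) < Q^n := pow_pos hQ0 n
    have hQm : (0:ℝ) < Q^m := pow_pos hQ0 m
    have hrw : Q^k / Q^n * (x^d)⁻¹ * ((Q*a)^m) = (Q^k * (x^d)⁻¹ * a^m * Q^m) / Q^n := by
      rw [mul_pow]; ring
    rw [hrw, div_lt_one hQn] at key0
    have hQnsplit : Q^n = Q^(r*m) * Q^m := by
      rw [hm, ← pow_add]
      congr 1
      ring
    rw [hQnsplit] at key0
    have hkey2 : Q^k * (x^d)⁻¹ * a^m < Q^(r*m) := (mul_lt_mul_iff_left₀ hQm).mp key0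
    have hdsub : d - 1 + 1 = d := Nat.succ_pred_eq_of_pos hd
    have hxd : (x^(d-1))⁻¹ = x * (x^d)⁻¹ := by
      rw [← hdsub, pow_succ, mul_inv]
      field_simp
      rw [Nat.add_sub_cancel]
    have hcst : ((q^k : ℕ) : ℝ) = Q^k := by rw [hQdef]; push_cast; ring
    rw [hcst, hxd]
    have hstep : Q^k * (x * (x^d)⁻¹ * a^m) < x * Q^(r*m) := by
      have := (mul_lt_mul_iff_right₀ hx0).mpr hkey2
      calc Q^k * (x * (x^d)⁻¹ * a^m) = x * (Q^k * (x^d)⁻¹ * a^m) := by ring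
        _ < x * Q^(r*m) := this
    calc Q^k * (x * (x^d)⁻¹ * a^m) < x * Q^(r*m) := hstep
      _ ≤ Q^(r*m) := mul_le_of_le_one_left (le_of_lt (pow_pos hQ0 _)) hx1
  -- run the greedy algorithm
  have hB0 : (0:ℝ) ≤ (x^(d-1))⁻¹ * a^m := by positivity
  obtain ⟨C', hC'P, hC'card, hC'dist⟩ := greedy P d hd ((x^(d-1))⁻¹ * a^m) hB0 hball (q^k)
    (lt_of_lt_of_le hkey hPcard)
  -- transport to Fin n
  have hcards : Fintype.card (Fin n) = Fintype.card (Fin m × Fin (r+1)) := by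
    simp [hm]; ring
  set e : Fin n ≃ Fin m × Fin (r+1) := Fintype.equivOfCardEq hcards with he
  have hinj : Function.Injective (fun v : Fin m × Fin (r+1) → F => (fun i : Fin n => v (e i))) := by
    intro v w h
    funext p
    have := congrFun h (e.symm p)
    simpa using this
  have hdist : ∀ v w : Fin m × Fin (r+1) → F,
      hammingDist (fun i : Fin n => v (e i)) (fun i : Fin n => w (e i)) = hammingDist v w := by
    intro v w
    simp only [hammingDist]
    apply Finset.card_bij' (fun i _ => e i) (fun p _ => e.symm p)
    · intro i hi; simp only [Finset.mem_filter, mem_univ, true_and] at hi ⊢; exact hi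
    · intro p hp; simp only [Finset.mem_filter, mem_univ, true_and] at hp ⊢; simpa using hp
    · intro i _; simp
    · intro p _; simp
  refine ⟨C'.image (fun v => fun i : Fin n => v (e i)), ?_, ?_, ?_⟩
  · rw [Finset.card_image_of_injective _ hinj, hC'card]
  · intro X hX Y hY hXY
    obtain ⟨v, hv, rfl⟩ := Finset.mem_image.mp hX
    obtain ⟨w, hw, rfl⟩ := Finset.mem_image.mp hY
    have hvw : v ≠ w := fun h => hXY (by rw [h])
    rw [hdist]
    exact hC'dist v hv w hw hvw
  · intro i
    set b := (e i).1 with hb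
    set S : Finset (Fin n) := univ.filter (fun l => (e l).1 = b) with hSdef
    have hiS : i ∈ S := by simp [hSdef, hb]
    have hScard : S.card = r + 1 := by
      rw [show r + 1 = (univ : Finset (Fin (r+1))).card by simp]
      apply Finset.card_bij' (fun l _ => (e l).2) (fun p _ => e.symm (b, p))
      · intro l _; exact mem_univ _
      · intro p _; simp [hSdef]
      · intro l hl
        simp only [hSdef, Finset.mem_filter, mem_univ, true_and] at hl
        rw [show ((b : Fin m), (e l).2) = e l by rw [← hl]]
        simp
      · intro p _; simp
    refine ⟨S.erase i, Finset.notMem_erase i S, by rw [Finset.card_erase_of_mem hiS, hScard]; rfl, ?_⟩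
    intro X hX Y hY hXYi
    obtain ⟨v, hv, rfl⟩ := Finset.mem_image.mp hX
    obtain ⟨w, hw, rfl⟩ := Finset.mem_image.mp hY
    by_contra hcon
    push_neg at hcon
    -- v and w agree on all of block b except coordinate (e i).2 , so parity forces agreement there
    have hvP : ∀ bb, ∑ j, v (bb, j) = 0 := by
      have := hC'P hv; rw [hPdef, Finset.mem_filter] at this; exact this.2
    have hwP : ∀ bb, ∑ j, w (bb, j) = 0 := by
      have := hC'P hw; rw [hPdef, Finset.mem_filter] at this; exact this.2
    have hagree : ∀ j : Fin (r+1), j ≠ (e i).2 → v (b, j) = w (b, j) := by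
      intro j hj
      have hl : e.symm (b, j) ∈ S.erase i := by
        rw [Finset.mem_erase]
        constructor
        · intro hli
          apply hj
          have h1 : e (e.symm (b, j)) = e i := by rw [hli]
          simp only [Equiv.apply_symm_apply] at h1
          exact congrArg Prod.snd h1
        · simp [hSdef]
      have := hcon _ hl
      simpa using this
    have hsum : v (b, (e i).2) - w (b, (e i).2) = ∑ j, (v (b, j) - w (b, j)) := by
      rw [Finset.sum_eq_single ((e i).2)]
      · intro j _ hj
        rw [hagree j hj, sub_self]
      · intro h; exact absurd (mem_univ _) h
    rw [Finset.sum_sub_distrib, hvP b, hwP b, sub_self] at hsum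
    apply hXYi
    show v (e i) = w (e i)
    have : v (b, (e i).2) = w (b, (e i).2) := by linear_combination hsum
    rw [hb] at this
    simpa using this
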